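/- For m = 2, the probability under the uniform distribution μ on the unit circle S¹ of the set {(x₁,x₂) ∈ S¹ : x₁² ≤ 1/√2 and x₂² ≤ 1/√2} equals K₂, and the constant c₂ = (2·2)^0 K₂/(1! · 2^{3/2} · Γ(2)) evaluates to −1/(2√2) + (√2/π) arcsin((1/2)^{1/4}). -/

import Mathlib

open Real MeasureTheory

/-- `K₂`: the probability, under the uniform distribution on the unit circle
(parametrized by angle), of the set `{x ∈ S¹ : x₁² ≤ √(1/2) ∧ x₂² ≤ √(1/2)}`. -/
noncomputable def K2 : ℝ :=
  (MeasureTheory.volume {θ : ℝ | θ ∈ Set.Ico 0 (2 * π) ∧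
      Real.cos θ ^ 2 ≤ Real.sqrt (1 / 2) ∧ Real.sin θ ^ 2 ≤ Real.sqrt (1 / 2)}).toReal /
    (2 * π)

namespace Stmt19Aux

noncomputable def a : ℝ := (1 / 2 : ℝ) ^ ((1 : ℝ) / 4)
noncomputable def α : ℝ := Real.arcsin a

lemma a_pos : 0 < a := Real.rpow_pos_of_pos (by norm_num) _

lemma a_lt_one : a < 1 := Real.rpow_lt_one (by norm_num) (by norm_num) (by norm_num)

lemma a_sq : a ^ 2 = Real.sqrt (1 / 2) := by
  rw [Real.sqrt_eq_rpow, a, ← Real.rpow_natCast ((1/2:ℝ) ^ ((1:ℝ)/4)) 2,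
    ← Real.rpow_mul (by norm_num)]
  norm_num

lemma sin_α : Real.sin α = a := Real.sin_arcsin (by linarith [a_pos]) a_lt_one.le

lemma α_lt : α < π / 2 := Real.arcsin_lt_pi_div_two.2 a_lt_one

lemma α_ge : π / 4 ≤ α := by
  have h1 : Real.sqrt 2 / 2 ≤ a := by
    have h : ((1:ℝ)/2) ^ ((1:ℝ)/2) ≤ (1/2 : ℝ) ^ ((1:ℝ)/4) :=
      Real.rpow_le_rpow_of_exponent_ge (by norm_num) (by norm_num) (by norm_num)
    have h2 : ((1:ℝ)/2) ^ ((1:ℝ)/2) = Real.sqrt 2 / 2 := by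
      rw [← Real.sqrt_eq_rpow]
      rw [show (1:ℝ)/2 = 2⁻¹ by norm_num, Real.sqrt_inv]
      rw [eq_div_iff (by norm_num), inv_mul_eq_div, div_eq_iff (Real.sqrt_pos.2 (by norm_num)).ne']
      rw [Real.mul_self_sqrt (by norm_num)]
    rw [← h2]; exact h
  have := Real.monotone_arcsin h1
  rwa [show Real.sqrt 2 / 2 = Real.sin (π/4) by rw [Real.sin_pi_div_four],
    Real.arcsin_sin (by linarith [pi_pos]) (by linarith [pi_pos])] at this

lemma core {θ : ℝ} (h0 : 0 ≤ θ) (h2 : θ ≤ π / 2) :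
    (Real.cos θ ^ 2 ≤ Real.sqrt (1 / 2) ∧ Real.sin θ ^ 2 ≤ Real.sqrt (1 / 2)) ↔
      (π / 2 - α ≤ θ ∧ θ ≤ α) := by
  have hπ := pi_pos
  rw [← a_sq]
  have hs : 0 ≤ Real.sin θ := Real.sin_nonneg_of_nonneg_of_le_pi h0 (by linarith)
  have hc : 0 ≤ Real.cos θ := Real.cos_nonneg_of_mem_Icc ⟨by linarith, h2⟩
  have ha := a_pos
  have hsin : Real.sin θ ^ 2 ≤ a ^ 2 ↔ θ ≤ α := by
    rw [show (Real.sin θ ^ 2 ≤ a ^ 2 ↔ Real.sin θ ≤ a) by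
      constructor
      · intro h; nlinarith
      · intro h; nlinarith]
    rw [← sin_α]
    exact Real.strictMonoOn_sin.le_iff_le ⟨by linarith, h2⟩
      ⟨by linarith [α_ge], α_lt.le⟩
  have hcos : Real.cos θ ^ 2 ≤ a ^ 2 ↔ π / 2 - α ≤ θ := by
    rw [show (Real.cos θ ^ 2 ≤ a ^ 2 ↔ Real.cos θ ≤ a) by
      constructor
      · intro h; nlinarith
      · intro h; nlinarith]
    rw [show a = Real.cos (π/2 - α) by rw [Real.cos_pi_div_two_sub, sin_α]]
    exact Real.strictAntiOn_cos.le_iff_ge ⟨h0, by linarith⟩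
      ⟨by linarith [α_lt], by linarith [α_ge]⟩
  rw [hsin, hcos, and_comm]

lemma set_eq :
    {θ : ℝ | θ ∈ Set.Ico 0 (2 * π) ∧
        Real.cos θ ^ 2 ≤ Real.sqrt (1 / 2) ∧ Real.sin θ ^ 2 ≤ Real.sqrt (1 / 2)} =
      Set.Icc (π/2 - α) α ∪ Set.Icc (π - α) (π/2 + α) ∪
        Set.Icc (3*π/2 - α) (π + α) ∪ Set.Icc (2*π - α) (3*π/2 + α) := by
  have hπ := pi_pos
  have hge := α_ge
  have hlt := α_lt
  ext θ
  simp only [Set.mem_setOf_eq, Set.mem_Ico, Set.mem_union, Set.mem_Icc]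
  constructor
  · rintro ⟨⟨h0, h2π⟩, hC⟩
    rcases le_or_gt θ (π/2) with h | h
    · exact Or.inl (Or.inl (Or.inl ((core h0 h).1 hC)))
    · rcases le_or_gt θ π with h' | h'
      · have hC' : Real.cos (π - θ) ^ 2 ≤ Real.sqrt (1/2) ∧
            Real.sin (π - θ) ^ 2 ≤ Real.sqrt (1/2) := by
          rw [Real.cos_pi_sub, Real.sin_pi_sub, neg_sq]; exact hC
        have := (core (by linarith) (by linarith)).1 hC'
        exact Or.inl (Or.inl (Or.inr ⟨by linarith [this.2], by linarith [this.1]⟩))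
      · rcases le_or_gt θ (3*π/2) with h'' | h''
        · have hC' : Real.cos (θ - π) ^ 2 ≤ Real.sqrt (1/2) ∧
              Real.sin (θ - π) ^ 2 ≤ Real.sqrt (1/2) := by
            rw [Real.cos_sub, Real.sin_sub, Real.cos_pi, Real.sin_pi]
            ring_nf
            ring_nf at hC
            exact hC
          have := (core (by linarith) (by linarith)).1 hC'
          exact Or.inl (Or.inr ⟨by linarith [this.1], by linarith [this.2]⟩)
        · have hC' : Real.cos (2*π - θ) ^ 2 ≤ Real.sqrt (1/2) ∧
              Real.sin (2*π - θ) ^ 2 ≤ Real.sqrt (1/2) := by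
            rw [Real.cos_sub, Real.sin_sub, Real.cos_two_pi, Real.sin_two_pi]
            ring_nf
            ring_nf at hC
            exact hC
          have := (core (by linarith) (by linarith)).1 hC'
          exact Or.inr ⟨by linarith [this.2], by linarith [this.1]⟩
  · rintro (((⟨hl, hr⟩ | ⟨hl, hr⟩) | ⟨hl, hr⟩) | ⟨hl, hr⟩)
    · exact ⟨⟨by linarith, by linarith⟩, (core (by linarith) (by linarith)).2 ⟨hl, hr⟩⟩
    · refine ⟨⟨by linarith, by linarith⟩, ?_⟩
      have := (core (show (0:ℝ) ≤ π - θ by linarith) (by linarith)).2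
        ⟨by linarith, by linarith⟩
      rwa [Real.cos_pi_sub, Real.sin_pi_sub, neg_sq] at this
    · refine ⟨⟨by linarith, by linarith⟩, ?_⟩
      have := (core (show (0:ℝ) ≤ θ - π by linarith) (by linarith)).2
        ⟨by linarith, by linarith⟩
      rw [Real.cos_sub, Real.sin_sub, Real.cos_pi, Real.sin_pi] at this
      ring_nf at this ⊢
      exact this
    · refine ⟨⟨by linarith, by linarith⟩, ?_⟩
      have := (core (show (0:ℝ) ≤ 2*π - θ by linarith) (by linarith)).2
        ⟨by linarith, by linarith⟩
      rw [Real.cos_sub, Real.sin_sub, Real.cos_two_pi, Real.sin_two_pi] at this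
      ring_nf at this ⊢
      exact this

lemma K2_eq : K2 = (8 * α - 2 * π) / (2 * π) := by
  have hπ := pi_pos
  have hge := α_ge
  have hlt := α_lt
  have hlen : (0:ℝ) ≤ 2 * α - π / 2 := by linarith
  rw [K2, set_eq]
  have d1 : Disjoint (Set.Icc (π/2 - α) α ∪ Set.Icc (π - α) (π/2 + α) ∪
      Set.Icc (3*π/2 - α) (π + α)) (Set.Icc (2*π - α) (3*π/2 + α)) := by
    rw [Set.disjoint_left]
    rintro x ((hx | hx) | hx) hy <;>
      simp only [Set.mem_Icc] at hx hy <;> linarith [hx.2, hy.1]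
  have d2 : Disjoint (Set.Icc (π/2 - α) α ∪ Set.Icc (π - α) (π/2 + α))
      (Set.Icc (3*π/2 - α) (π + α)) := by
    rw [Set.disjoint_left]
    rintro x (hx | hx) hy <;>
      simp only [Set.mem_Icc] at hx hy <;> linarith [hx.2, hy.1]
  have d3 : Disjoint (Set.Icc (π/2 - α) α) (Set.Icc (π - α) (π/2 + α)) := by
    rw [Set.disjoint_left]
    intro x hx hy
    simp only [Set.mem_Icc] at hx hy
    linarith [hx.2, hy.1]
  rw [measure_union d1 measurableSet_Icc, measure_union d2 measurableSet_Icc,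
    measure_union d3 measurableSet_Icc]
  simp only [Real.volume_Icc]
  rw [← ENNReal.ofReal_add (by linarith) (by linarith),
    ← ENNReal.ofReal_add (by linarith) (by linarith),
    ← ENNReal.ofReal_add (by linarith) (by linarith)]
  rw [ENNReal.toReal_ofReal (by linarith)]
  ring_nf

end Stmt19Aux

theorem stmt_19 :
    (2 * 2 : ℝ) ^ (((2 : ℝ) - 2) / 2) * K2 /
        ((Nat.factorial (2 - 1) : ℝ) * (2 : ℝ) ^ ((3 : ℝ) / 2) * Real.Gamma (1 + 2 / 2)) =
      -1 / (2 * Real.sqrt 2) + (Real.sqrt 2 / π) * Real.arcsin ((1 / 2 : ℝ) ^ ((1 : ℝ) / 4)) := by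
  have hπ := pi_pos
  have h1 : ((2:ℝ) - 2) / 2 = 0 := by norm_num
  have h2 : ((1:ℝ) + 2 / 2) = 2 := by norm_num
  have h3 : (Nat.factorial (2 - 1) : ℝ) = 1 := by norm_num [Nat.factorial]
  have h4 : (2:ℝ) ^ ((3:ℝ)/2) = 2 * Real.sqrt 2 := by
    rw [show ((3:ℝ)/2) = 1 + 1/2 by norm_num, Real.rpow_add (by norm_num), Real.rpow_one,
      ← Real.sqrt_eq_rpow]
  rw [h1, h2, h3, h4, Real.rpow_zero, Real.Gamma_two, Stmt19Aux.K2_eq]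
  have hα : Real.arcsin ((1 / 2 : ℝ) ^ ((1 : ℝ) / 4)) = Stmt19Aux.α := rfl
  rw [hα]
  have hs2 : Real.sqrt 2 * Real.sqrt 2 = 2 := Real.mul_self_sqrt (by norm_num)
  have hs2pos : (0:ℝ) < Real.sqrt 2 := Real.sqrt_pos.2 (by norm_num)
  have hcube : Real.sqrt 2 ^ 3 = 2 * Real.sqrt 2 := by
    rw [pow_succ, sq, hs2]
  field_simp
  ring_nf
  rw [Real.sq_sqrt (by norm_num : (0:ℝ) ≤ 2)]
  ring
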